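/- arXiv:1610.09767 — 2 statements merged into one kernel-verified Lean document; each statement's English description precedes it below -/
import Mathlib

section
/- Fix integers r ≥ 2, m ≥ 1, and 1 ≤ t ≤ 2^m − 1, and let C be a binary linear code with coordinates indexed by Ω_t^{(m)} whose codewords satisfy x_α = Σ_{β∈L(α)} x_β for all α ∈ Ω_t^{(m)}\Ω_0^{(m)}. For α ∈ Ω_t^{(m)} and ℓ ∈ [m], let L^{(ℓ)}_α be the set of the r+1 points of Z_{r+1}^m agreeing with α in every coordinate except possibly the ℓ-th. If L^{(ℓ)}_α ⊆ Ω_t^{(m)}, then R = L^{(ℓ)}_α \ {α} is a recovering set of α of size r, i.e., x_α = Σ_{β∈R} x_β for every codeword x ∈ C. -/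
open Finset

/-- `supp_m(s)`: the support of the `m`-digit binary representation of `s`,
with digit `ℓ` (0-indexed) corresponding to `2^ℓ`. -/
def suppm (m s : ℕ) : Finset (Fin m) :=
  Finset.univ.filter (fun ℓ => s.testBit ℓ.val)

/-- `U(α) = {ℓ ∈ [m] : α_ℓ = r}`, for `α ∈ Z_{r+1}^m`. -/
def Uset (r m : ℕ) (α : Fin m → Fin (r + 1)) : Finset (Fin m) :=
  Finset.univ.filter (fun ℓ => (α ℓ : ℕ) = r)

/-- `L(α) = {β ∈ Z_r^m : β_ℓ = α_ℓ for all ℓ with α_ℓ < r}`, with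
`Z_r ⊆ Z_{r+1}` viewed as the elements of value `< r`. -/
def Lset (r m : ℕ) (α : Fin m → Fin (r + 1)) : Finset (Fin m → Fin (r + 1)) :=
  Finset.univ.filter (fun β =>
    (∀ ℓ, (β ℓ : ℕ) < r) ∧ ∀ ℓ, (α ℓ : ℕ) < r → β ℓ = α ℓ)

/-- `Γ_s = {α ∈ Z_{r+1}^m : U(α) = supp_m(s)}`. -/
def Gam (r m s : ℕ) : Finset (Fin m → Fin (r + 1)) :=
  Finset.univ.filter (fun α => Uset r m α = suppm m s)

/-- `Ω_t^{(m)} = ⋃_{s=0}^{t} Γ_s`. -/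
def Omeg (r m t : ℕ) : Finset (Fin m → Fin (r + 1)) :=
  (Finset.range (t + 1)).biUnion (Gam r m)

/-- The coordinate index set `Ω_t^{(m)}` as a type. -/
abbrev OmegIdx (r m t : ℕ) : Type := {α : Fin m → Fin (r + 1) // α ∈ Omeg r m t}

/-- The columns of the row of `H_t^{(m)}` indexed by `α`, other than `α` itself:
the coordinates in `Ω_t^{(m)}` whose index lies in `L(α)`. -/
def LIdx (r m t : ℕ) (α : Fin m → Fin (r + 1)) : Finset (OmegIdx r m t) :=
  Finset.univ.filter (fun β => β.1 ∈ Lset r m α)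

/-- `L^{(ℓ)}_α`: the `r+1` points of `Z_{r+1}^m` agreeing with `α` in every
coordinate except possibly the `ℓ`-th. -/
def Lline (r m : ℕ) (α : Fin m → Fin (r + 1)) (ℓ : Fin m) : Finset (Fin m → Fin (r + 1)) :=
  Finset.univ.filter (fun β => ∀ j, j ≠ ℓ → β j = α j)

lemma mem_Lset_iff {r m : ℕ} {γ β : Fin m → Fin (r + 1)} :
    β ∈ Lset r m γ ↔ (∀ j, (β j : ℕ) < r) ∧ ∀ j, (γ j : ℕ) < r → β j = γ j := by
  simp [Lset]

lemma mem_Omeg0_iff {r m : ℕ} {γ : Fin m → Fin (r + 1)} :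
    γ ∈ Omeg r m 0 ↔ ∀ j, (γ j : ℕ) < r := by
  simp only [Omeg, Finset.mem_biUnion, Finset.mem_range, zero_add, Nat.lt_one_iff,
    exists_eq_left, Gam, Finset.mem_filter, Finset.mem_univ, true_and,
    suppm, Nat.zero_testBit, Bool.false_eq_true, Finset.filter_false, Uset,
    Finset.eq_empty_iff_forall_notMem]
  constructor
  · intro h j
    have := h j
    have h2 := (γ j).isLt
    omega
  · intro h j
    have := h j
    omega

/-- Lemma 7: if `C` is a binary linear code on the coordinates `Ω_t^{(m)}` whose
codewords satisfy `x_α = ∑_{β ∈ L(α)} x_β` for all `α ∈ Ω_t^{(m)} \ Ω_0^{(m)}`, and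
`L^{(ℓ)}_α ⊆ Ω_t^{(m)}`, then `R = L^{(ℓ)}_α \ {α}` is a recovering set of `α` of
size `r`. -/
theorem line_is_recovering_set (r m t : ℕ) (hr : 2 ≤ r) (ht1 : 1 ≤ t) (ht2 : t ≤ 2 ^ m - 1)
    (C : Submodule (ZMod 2) (OmegIdx r m t → ZMod 2))
    (hC : ∀ x ∈ C, ∀ α : OmegIdx r m t, α.1 ∉ Omeg r m 0 →
      x α = ∑ β ∈ LIdx r m t α.1, x β)
    (α : OmegIdx r m t) (ℓ : Fin m) (hsub : Lline r m α.1 ℓ ⊆ Omeg r m t) :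
    (Finset.univ.filter (fun β : OmegIdx r m t =>
        β.1 ∈ Lline r m α.1 ℓ ∧ β ≠ α)).card = r ∧
    α ∉ Finset.univ.filter (fun β : OmegIdx r m t => β.1 ∈ Lline r m α.1 ℓ ∧ β ≠ α) ∧
    ∀ x ∈ C, x α = ∑ β ∈ Finset.univ.filter (fun β : OmegIdx r m t =>
        β.1 ∈ Lline r m α.1 ℓ ∧ β ≠ α), x β := by
  classical
  set a : Fin (r + 1) := α.1 ℓ with ha
  have hmemline : ∀ i : Fin (r + 1), Function.update α.1 ℓ i ∈ Lline r m α.1 ℓ := by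
    intro i
    simp only [Lline, Finset.mem_filter, Finset.mem_univ, true_and]
    intro j hj
    exact Function.update_of_ne hj _ _
  set e : Fin (r + 1) → OmegIdx r m t := fun i => ⟨Function.update α.1 ℓ i, hsub (hmemline i)⟩
    with he
  have heval : ∀ i, (e i).1 = Function.update α.1 ℓ i := fun i => rfl
  have heinj : Function.Injective e := by
    intro i i' h
    have := congrFun (congrArg Subtype.val h) ℓ
    simpa [heval, Function.update_self] using this
  have hea : e a = α := by
    apply Subtype.ext
    simp [heval, ha, Function.update_eq_self]
  have hline_rep : ∀ β : OmegIdx r m t, β.1 ∈ Lline r m α.1 ℓ → β = e (β.1 ℓ) := by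
    intro β hβ
    simp only [Lline, Finset.mem_filter, Finset.mem_univ, true_and] at hβ
    apply Subtype.ext
    funext j
    by_cases hj : j = ℓ
    · subst hj; simp [heval, Function.update_self]
    · rw [heval, Function.update_of_ne hj, hβ j hj]
  have hSeq : Finset.univ.filter (fun β : OmegIdx r m t =>
      β.1 ∈ Lline r m α.1 ℓ ∧ β ≠ α) = (Finset.univ.erase a).image e := by
    ext β
    simp only [Finset.mem_filter, Finset.mem_univ, true_and, Finset.mem_image,
      Finset.mem_erase]
    constructor
    · rintro ⟨hb, hba⟩
      refine ⟨β.1 ℓ, ⟨?_, trivial⟩, (hline_rep β hb).symm⟩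
      intro h
      exact hba (by rw [hline_rep β hb, h, hea])
    · rintro ⟨i, ⟨hia, -⟩, rfl⟩
      exact ⟨hmemline i, fun h => hia (heinj (h.trans hea.symm))⟩
  refine ⟨?_, ?_, ?_⟩
  · rw [hSeq, Finset.card_image_of_injective _ heinj,
      Finset.card_erase_of_mem (Finset.mem_univ a), Finset.card_univ, Fintype.card_fin]
    omega
  · simp
  · intro x hx
    rw [hSeq, Finset.sum_image (fun i _ j _ h => heinj h)]
    have hinner : ∀ i : Fin (r + 1),
        x (e i) = ∑ β ∈ LIdx r m t (Function.update α.1 ℓ i), x β := by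
      intro i
      by_cases h0 : Function.update α.1 ℓ i ∈ Omeg r m 0
      · have hall : ∀ j, ((Function.update α.1 ℓ i) j : ℕ) < r := mem_Omeg0_iff.mp h0
        have hsing : LIdx r m t (Function.update α.1 ℓ i) = {e i} := by
          ext β
          simp only [LIdx, Finset.mem_filter, Finset.mem_univ, true_and,
            Finset.mem_singleton, mem_Lset_iff]
          constructor
          · rintro ⟨-, h2⟩
            apply Subtype.ext
            funext j
            exact h2 j (hall j)
          · rintro rfl
            exact ⟨hall, fun j _ => rfl⟩
        rw [hsing, Finset.sum_singleton]
      · exact hC x hx (e i) h0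
    have hlastval : ((Fin.last r : Fin (r + 1)) : ℕ) = r := rfl
    have hlastnot : Function.update α.1 ℓ (Fin.last r) ∉ Omeg r m 0 := by
      rw [mem_Omeg0_iff]
      push_neg
      exact ⟨ℓ, by simp [Function.update_self]⟩
    have hLs : Lset r m (Function.update α.1 ℓ (Fin.last r)) =
        (Finset.univ.filter (fun i : Fin (r + 1) => (i : ℕ) < r)).biUnion
          (fun i => Lset r m (Function.update α.1 ℓ i)) := by
      ext β
      simp only [Finset.mem_biUnion, Finset.mem_filter, Finset.mem_univ, true_and,
        mem_Lset_iff]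
      constructor
      · rintro ⟨h1, h2⟩
        refine ⟨β ℓ, h1 ℓ, h1, ?_⟩
        intro j hj
        by_cases hjl : j = ℓ
        · subst hjl; simp [Function.update_self]
        · rw [Function.update_of_ne hjl] at hj ⊢
          have := h2 j (by rwa [Function.update_of_ne hjl])
          rwa [Function.update_of_ne hjl] at this
      · rintro ⟨i, hi, h1, h2⟩
        refine ⟨h1, ?_⟩
        intro j hj
        by_cases hjl : j = ℓ
        · subst hjl
          rw [Function.update_self] at hj
          simp only [hlastval] at hj
          omega
        · rw [Function.update_of_ne hjl] at hj ⊢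
          have := h2 j (by rwa [Function.update_of_ne hjl])
          rwa [Function.update_of_ne hjl] at this
    have hbi : LIdx r m t (Function.update α.1 ℓ (Fin.last r)) =
        (Finset.univ.filter (fun i : Fin (r + 1) => (i : ℕ) < r)).biUnion
          (fun i => LIdx r m t (Function.update α.1 ℓ i)) := by
      ext β
      simp only [LIdx, Finset.mem_filter, Finset.mem_univ, true_and, hLs,
        Finset.mem_biUnion]
    have hdisj : (↑(Finset.univ.filter (fun i : Fin (r + 1) => (i : ℕ) < r)) :
        Set (Fin (r + 1))).PairwiseDisjoint
        (fun i => LIdx r m t (Function.update α.1 ℓ i)) := by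
      intro i hi i' hi' hne
      simp only [Finset.coe_filter, Set.mem_setOf_eq, Finset.mem_univ, true_and] at hi hi'
      rw [Function.onFun, Finset.disjoint_left]
      intro β hβ hβ'
      simp only [LIdx, Finset.mem_filter, Finset.mem_univ, true_and, mem_Lset_iff] at hβ hβ'
      have e1 : β.1 ℓ = i := by
        have := hβ.2 ℓ (by rw [Function.update_self]; exact hi)
        rwa [Function.update_self] at this
      have e2 : β.1 ℓ = i' := by
        have := hβ'.2 ℓ (by rw [Function.update_self]; exact hi')
        rwa [Function.update_self] at this
      exact hne (e1 ▸ e2)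
    have hA : x (e (Fin.last r)) =
        ∑ i ∈ Finset.univ.filter (fun i : Fin (r + 1) => (i : ℕ) < r), x (e i) := by
      rw [hinner (Fin.last r), hbi, Finset.sum_biUnion hdisj]
      exact Finset.sum_congr rfl (fun i _ => (hinner i).symm)
    have hnotfilter : Finset.univ.filter (fun i : Fin (r + 1) => ¬ (i : ℕ) < r) =
        {Fin.last r} := by
      ext i
      simp only [Finset.mem_filter, Finset.mem_univ, true_and, Finset.mem_singleton,
        not_lt]
      constructor
      · intro h
        have := i.isLt
        exact Fin.ext (by omega)
      · rintro rfl
        simp [hlastval]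
    have htot : ∑ i : Fin (r + 1), x (e i) = 0 := by
      rw [← Finset.sum_filter_add_sum_filter_not Finset.univ (fun i : Fin (r + 1) =>
        (i : ℕ) < r), hnotfilter, Finset.sum_singleton, ← hA, CharTwo.add_self_eq_zero]
    have herase : ∑ i ∈ Finset.univ.erase a, x (e i) =
        (∑ i : Fin (r + 1), x (e i)) - x (e a) :=
      Finset.sum_erase_eq_sub (Finset.mem_univ a)
    rw [herase, htot, hea, zero_sub, CharTwo.neg_eq]
end

section
/- Fix integers r ≥ 2, m ≥ 1, and 1 ≤ t ≤ 2^m − 1, and let C be a binary linear code with coordinates indexed by Ω_t^{(m)} whose codewords satisfy x_α = Σ_{β∈L(α)} x_β for all α ∈ Ω_t^{(m)}\Ω_0^{(m)}. Then for every nonempty subset E ⊆ Ω_t^{(m)}\Ω_0^{(m)}, there exists α ∈ E having a recovering set R ⊆ Ω_t^{(m)} \ E of size at most r. -/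
open Finset

lemma testBit_sum_ite (p : ℕ → Prop) [DecidablePred p] :
    ∀ n k, (∑ i ∈ Finset.range n, if p i then 2^i else 0).testBit k
      = (decide (k < n) && decide (p k)) := by
  intro n
  induction n with
  | zero => intro k; simp
  | succ n ih =>
    intro k
    have hx : (∑ i ∈ Finset.range n, if p i then 2^i else 0) < 2^n := by
      calc (∑ i ∈ Finset.range n, if p i then 2^i else 0)
          ≤ ∑ i ∈ Finset.range n, 2^i := Finset.sum_le_sum (by intro i _; split <;> simp)
        _ < 2^n := by
            rw [Nat.geomSum_eq (le_refl 2)]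
            have h1 : (1:ℕ) ≤ 2^n := Nat.one_le_two_pow
            omega
    rw [Finset.sum_range_succ]
    by_cases hp : p n
    · have hrw : (∑ i ∈ Finset.range n, if p i then 2^i else 0) + (if p n then 2^n else 0)
          = 2^n + ∑ i ∈ Finset.range n, if p i then 2^i else 0 := by
        rw [if_pos hp]; ring
      rw [hrw]
      rcases lt_trichotomy k n with h | h | h
      · rw [Nat.testBit_two_pow_add_gt h, ih]
        simp [h, Nat.lt_succ_of_lt h]
      · subst h
        rw [Nat.testBit_two_pow_add_eq]
        simp [Nat.testBit_eq_false_of_lt hx, hp]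
      · have : 2^n + (∑ i ∈ Finset.range n, if p i then 2^i else 0) < 2^k := by
          calc 2^n + (∑ i ∈ Finset.range n, if p i then 2^i else 0) < 2^n + 2^n := by omega
          _ = 2^(n+1) := by ring
          _ ≤ 2^k := Nat.pow_le_pow_right (by norm_num) h
        rw [Nat.testBit_eq_false_of_lt this]
        have hk : ¬ (k < n+1) := by omega
        rw [decide_eq_false hk, Bool.false_and]
    · rw [if_neg hp, add_zero, ih]
      rcases eq_or_ne k n with rfl | h
      · simp [hp]
      · congr 1
        simp only [decide_eq_decide]
        omega

lemma testBit_sum_finset {m : ℕ} (S : Finset (Fin m)) (k : ℕ) :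
    (∑ ℓ ∈ S, 2^(ℓ:ℕ)).testBit k = decide (∃ h : k < m, (⟨k, h⟩ : Fin m) ∈ S) := by
  classical
  have himg : S.image Fin.val = (Finset.range m).filter (fun i => ∃ ℓ ∈ S, (ℓ:ℕ) = i) := by
    ext i
    simp only [Finset.mem_image, Finset.mem_filter, Finset.mem_range]
    constructor
    · rintro ⟨ℓ, hℓ, rfl⟩; exact ⟨ℓ.isLt, ℓ, hℓ, rfl⟩
    · rintro ⟨hi, ℓ, hℓ, rfl⟩; exact ⟨ℓ, hℓ, rfl⟩
  have h1 := Finset.sum_image (s := S) (g := Fin.val) (f := fun i => (2:ℕ)^i)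
    (fun a _ b _ h => Fin.ext h)
  rw [← h1, himg, Finset.sum_filter, testBit_sum_ite]
  rcases Nat.lt_or_ge k m with h | h
  · rw [decide_eq_true h, Bool.true_and, decide_eq_decide]
    constructor
    · rintro ⟨ℓ, hℓ, rfl⟩; exact ⟨ℓ.isLt, by simpa using hℓ⟩
    · rintro ⟨_, hmem⟩; exact ⟨_, hmem, rfl⟩
  · have hk : ¬ (k < m) := by omega
    rw [decide_eq_false hk, Bool.false_and]
    have : ¬ ∃ h : k < m, (⟨k, h⟩ : Fin m) ∈ S := by rintro ⟨h, _⟩; omega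
    rw [decide_eq_false this]

lemma suppm_sum {m : ℕ} (S : Finset (Fin m)) : suppm m (∑ ℓ ∈ S, 2^(ℓ:ℕ)) = S := by
  ext ℓ
  simp only [suppm, Finset.mem_filter, Finset.mem_univ, true_and, testBit_sum_finset,
    decide_eq_true_eq]
  constructor
  · rintro ⟨h, hmem⟩; simpa using hmem
  · intro h; exact ⟨ℓ.isLt, by simpa using h⟩

lemma sum_suppm {m s : ℕ} (hs : s < 2^m) : (∑ ℓ ∈ suppm m s, 2^(ℓ:ℕ)) = s := by
  apply Nat.eq_of_testBit_eq
  intro k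
  rw [testBit_sum_finset]
  rcases Nat.lt_or_ge k m with h | h
  · rw [decide_eq_decide.2 ⟨fun ⟨_, hm⟩ => by simpa [suppm] using hm,
      fun hb => ⟨h, by simpa [suppm] using hb⟩⟩, Bool.decide_coe]
  · have h2 : s < 2^k := lt_of_lt_of_le hs (Nat.pow_le_pow_right (by norm_num) h)
    rw [Nat.testBit_eq_false_of_lt h2]
    have : ¬ ∃ hh : k < m, (⟨k, hh⟩ : Fin m) ∈ suppm m s := by rintro ⟨hh, _⟩; omega
    rw [decide_eq_false this]

lemma mem_Omeg_iff {r m t : ℕ} (ht : t < 2^m) (α : Fin m → Fin (r+1)) :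
    α ∈ Omeg r m t ↔ (∑ ℓ ∈ Uset r m α, 2^(ℓ:ℕ)) ≤ t := by
  constructor
  · rintro h
    rw [Omeg, Finset.mem_biUnion] at h
    obtain ⟨s, hs, hg⟩ := h
    rw [Finset.mem_range] at hs
    rw [Gam, Finset.mem_filter] at hg
    rw [hg.2, sum_suppm (by omega)]
    omega
  · intro h
    rw [Omeg, Finset.mem_biUnion]
    refine ⟨∑ ℓ ∈ Uset r m α, 2^(ℓ:ℕ), Finset.mem_range.2 (by omega), ?_⟩
    rw [Gam, Finset.mem_filter]
    exact ⟨Finset.mem_univ _, (suppm_sum _).symm⟩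

lemma mem_Omeg0_iff_s12 {r m : ℕ} (α : Fin m → Fin (r+1)) :
    α ∈ Omeg r m 0 ↔ Uset r m α = ∅ := by
  rw [mem_Omeg_iff (Nat.two_pow_pos m), Nat.le_zero, Finset.sum_eq_zero_iff]
  constructor
  · intro h
    rw [Finset.eq_empty_iff_forall_notMem]
    intro ℓ hℓ
    have := h ℓ hℓ
    exact absurd this (by positivity)
  · intro h; simp [h]

lemma Lset_update {r m : ℕ} (α : Fin m → Fin (r+1)) (ℓ : Fin m) (hℓ : (α ℓ : ℕ) = r)
    (j : Fin r) (β : Fin m → Fin (r+1)) :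
    β ∈ Lset r m (Function.update α ℓ j.castSucc) ↔
      β ∈ Lset r m α ∧ β ℓ = j.castSucc := by
  simp only [Lset, Finset.mem_filter, Finset.mem_univ, true_and]
  constructor
  · rintro ⟨h1, h2⟩
    have hβℓ : β ℓ = j.castSucc := by
      have := h2 ℓ (by simp [Function.update_self])
      simpa [Function.update_self] using this
    refine ⟨⟨h1, fun k hk => ?_⟩, hβℓ⟩
    have hkℓ : k ≠ ℓ := by intro h; subst h; omega
    have := h2 k (by simpa [Function.update_of_ne hkℓ] using hk)
    simpa [Function.update_of_ne hkℓ] using this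
  · rintro ⟨⟨h1, h2⟩, h3⟩
    refine ⟨h1, fun k hk => ?_⟩
    rcases eq_or_ne k ℓ with rfl | hkℓ
    · simpa [Function.update_self] using h3
    · rw [Function.update_of_ne hkℓ] at hk ⊢
      exact h2 k hk

lemma Uset_update {r m : ℕ} (α : Fin m → Fin (r+1)) (ℓ : Fin m) (hℓ : (α ℓ : ℕ) = r)
    (j : Fin r) :
    Uset r m (Function.update α ℓ j.castSucc) = (Uset r m α).erase ℓ := by
  ext k
  simp only [Uset, Finset.mem_filter, Finset.mem_univ, true_and, Finset.mem_erase]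
  rcases eq_or_ne k ℓ with rfl | hkℓ
  · simp [Function.update_self]
    have := j.isLt
    omega
  · simp [Function.update_of_ne hkℓ, hkℓ]

/-- Lemma 8: if `C` is a binary linear code on the coordinates `Ω_t^{(m)}` whose
codewords satisfy `x_α = ∑_{β ∈ L(α)} x_β` for all `α ∈ Ω_t^{(m)} \ Ω_0^{(m)}`, then
for every nonempty `E ⊆ Ω_t^{(m)} \ Ω_0^{(m)}` there is an `α ∈ E` having a recovering
set `R ⊆ Ω_t^{(m)} \ E` of size at most `r`. -/
theorem exists_recoverable_outside_info (r m t : ℕ) (hr : 2 ≤ r) (ht1 : 1 ≤ t)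
    (ht2 : t ≤ 2 ^ m - 1)
    (C : Submodule (ZMod 2) (OmegIdx r m t → ZMod 2))
    (hC : ∀ x ∈ C, ∀ α : OmegIdx r m t, α.1 ∉ Omeg r m 0 →
      x α = ∑ β ∈ LIdx r m t α.1, x β)
    (E : Finset (OmegIdx r m t)) (hEne : E.Nonempty)
    (hE : ∀ α ∈ E, α.1 ∉ Omeg r m 0) :
    ∃ α ∈ E, ∃ R : Finset (OmegIdx r m t),
      α ∉ R ∧ R.card ≤ r ∧ R ⊆ Eᶜ ∧ ∀ x ∈ C, x α = ∑ β ∈ R, x β := by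
  classical
  have htm : t < 2^m := by
    have h1 : 1 ≤ 2^m := Nat.one_le_two_pow
    omega
  obtain ⟨α, hαE, hmin⟩ := E.exists_min_image (fun β => ∑ k ∈ Uset r m β.1, 2^(k:ℕ)) hEne
  have hα0 := hE α hαE
  have hUne : (Uset r m α.1).Nonempty := by
    rw [Finset.nonempty_iff_ne_empty]
    intro h
    exact hα0 ((mem_Omeg0_iff_s12 α.1).2 h)
  obtain ⟨ℓ, hℓU⟩ := hUne
  have hαℓ : (α.1 ℓ : ℕ) = r := by simpa [Uset] using hℓU
  set A : Fin r → (Fin m → Fin (r+1)) := fun j => Function.update α.1 ℓ j.castSucc with hA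
  have hUA : ∀ j, Uset r m (A j) = (Uset r m α.1).erase ℓ :=
    fun j => Uset_update α.1 ℓ hαℓ j
  have hαΩ : (∑ k ∈ Uset r m α.1, 2^(k:ℕ)) ≤ t := (mem_Omeg_iff htm α.1).1 α.2
  have hlt : (∑ k ∈ (Uset r m α.1).erase ℓ, 2^(k:ℕ)) < ∑ k ∈ Uset r m α.1, 2^(k:ℕ) := by
    have h1 : 2^(ℓ:ℕ) + ∑ k ∈ (Uset r m α.1).erase ℓ, 2^(k:ℕ)
        = ∑ k ∈ Uset r m α.1, 2^(k:ℕ) := Finset.add_sum_erase (Uset r m α.1) (fun k => 2^(k:ℕ)) hℓU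
    have h2 : 0 < 2^(ℓ:ℕ) := by positivity
    omega
  have hAΩ : ∀ j, A j ∈ Omeg r m t := by
    intro j
    rw [mem_Omeg_iff htm, hUA j]
    omega
  set Ai : Fin r → OmegIdx r m t := fun j => ⟨A j, hAΩ j⟩ with hAi
  have hAiℓ : ∀ j, (Ai j).1 ℓ = j.castSucc := fun j => Function.update_self ℓ _ _
  have hAinj : Function.Injective Ai := by
    intro a b hab
    have h1 : (Ai a).1 ℓ = (Ai b).1 ℓ := by rw [hab]
    rw [hAiℓ a, hAiℓ b] at h1
    exact Fin.castSucc_injective r h1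
  refine ⟨α, hαE, Finset.univ.image Ai, ?_, ?_, ?_, ?_⟩
  · simp only [Finset.mem_image]
    rintro ⟨j, -, hj⟩
    have h1 : α.1 ℓ = j.castSucc := by rw [← hj, hAiℓ j]
    have h2 : (j.castSucc : ℕ) = (j : ℕ) := rfl
    have := j.isLt
    omega
  · exact Finset.card_image_le.trans (by simp)
  · intro β hβ
    simp only [Finset.mem_image] at hβ
    obtain ⟨j, -, rfl⟩ := hβ
    rw [Finset.mem_compl]
    intro hβE
    have h1 := hmin _ hβE
    change _ ≤ ∑ k ∈ Uset r m (A j), 2^(k:ℕ) at h1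
    rw [hUA j] at h1
    omega
  · intro x hx
    have expand : ∀ γ : OmegIdx r m t, x γ = ∑ β ∈ LIdx r m t γ.1, x β := by
      intro γ
      by_cases hγ : γ.1 ∈ Omeg r m 0
      · have hU : Uset r m γ.1 = ∅ := (mem_Omeg0_iff_s12 γ.1).1 hγ
        have hγr : ∀ k, (γ.1 k : ℕ) < r := by
          intro k
          have h1 : (γ.1 k : ℕ) ≠ r := by
            intro h
            have hk : k ∈ Uset r m γ.1 := by simp [Uset, h]
            simp [hU] at hk
          have := (γ.1 k).isLt
          omega
        have hsing : LIdx r m t γ.1 = {γ} := by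
          ext β
          simp only [LIdx, Finset.mem_filter, Finset.mem_univ, true_and, Lset,
            Finset.mem_singleton]
          constructor
          · rintro ⟨h1, h2⟩
            apply Subtype.ext
            funext k
            exact h2 k (hγr k)
          · rintro rfl
            exact ⟨hγr, fun k _ => rfl⟩
        rw [hsing, Finset.sum_singleton]
      · exact hC x hx γ hγ
    have hdisj : (↑(Finset.univ : Finset (Fin r)) : Set (Fin r)).PairwiseDisjoint
        (fun j => LIdx r m t (A j)) := by
      intro j1 _ j2 _ hne
      simp only [Function.onFun]
      rw [Finset.disjoint_left]
      intro b hb1 hb2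
      simp only [LIdx, Finset.mem_filter, Finset.mem_univ, true_and] at hb1 hb2
      have h1 := ((Lset_update α.1 ℓ hαℓ j1 b.1).1 hb1).2
      have h2 := ((Lset_update α.1 ℓ hαℓ j2 b.1).1 hb2).2
      exact hne (Fin.castSucc_injective r (h1 ▸ h2 ▸ rfl))
    have hpart : LIdx r m t α.1 = Finset.univ.biUnion (fun j => LIdx r m t (A j)) := by
      ext β
      simp only [LIdx, Finset.mem_filter, Finset.mem_univ, true_and, Finset.mem_biUnion]
      constructor
      · intro hβ
        have hβr : (β.1 ℓ : ℕ) < r := by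
          rw [Lset, Finset.mem_filter] at hβ
          exact hβ.2.1 ℓ
        refine ⟨⟨(β.1 ℓ : ℕ), hβr⟩, ?_⟩
        rw [Lset_update α.1 ℓ hαℓ]
        exact ⟨hβ, by apply Fin.ext; simp⟩
      · rintro ⟨j, hj⟩
        exact ((Lset_update α.1 ℓ hαℓ j β.1).1 hj).1
    rw [expand α, hpart, Finset.sum_biUnion hdisj,
      Finset.sum_image (fun a _ b _ h => hAinj h)]
    exact Finset.sum_congr rfl (fun j _ => (expand (Ai j)).symm)
end
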